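/- Let K be a field and n a natural number. Let u, v : Fin (n+2) → K^{n+1} be two families of nonzero vectors each in general position, meaning that every subfamily of n+1 of the vectors u i is linearly independent, and likewise for v. Then there exist g ∈ GL_{n+1}(K) and scalars λ : Fin (n+2) → Kˣ such that g (u i) = λ i • (v i) for all i; moreover g is unique up to multiplication by a scalar matrix, i.e. if g' ∈ GL_{n+1}(K) also satisfies g' (u i) ∈ Kˣ • (v i) for all i, then g'⁻¹ g is a scalar multiple of the identity. In particular, PGL_{n+1}(K) acts sharply transitively on projective frames of the projective space P(K^{n+1}), so its action on Pⁿ(K) is generically (n+2)-transitive. -/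

import Mathlib

lemma aux_li {K : Type*} [Field K] {n : ℕ} (w : Fin (n + 2) → (Fin (n + 1) → K))
    (h : ∀ s : Finset (Fin (n + 2)), s.card = n + 1 →
      LinearIndependent K (fun i : s => w i)) (p : Fin (n + 2)) :
    LinearIndependent K (w ∘ p.succAbove) := by
  have hcard : ({p}ᶜ : Finset (Fin (n + 2))).card = n + 1 := by
    simp [Finset.card_compl]
  have li := h _ hcard
  have : (w ∘ p.succAbove) = (fun i : ({p}ᶜ : Finset (Fin (n+2))) => w i) ∘
      (fun i : Fin (n+1) => (⟨p.succAbove i, by simp [Fin.succAbove_ne]⟩ : ({p}ᶜ : Finset (Fin (n+2))))) := rfl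
  rw [this]
  exact li.comp _ (fun a b hab => Fin.succAbove_right_injective (p := p) (by simpa using hab))

lemma aux_frame {K : Type*} [Field K] {n : ℕ} (w : Fin (n + 2) → (Fin (n + 1) → K))
    (h : ∀ s : Finset (Fin (n + 2)), s.card = n + 1 →
      LinearIndependent K (fun i : s => w i)) :
    ∃ B : Module.Basis (Fin (n + 1)) K (Fin (n + 1) → K), (∀ i, B i = w i.castSucc) ∧
      ∃ a : Fin (n + 1) → K, (∀ i, a i ≠ 0) ∧
        w (Fin.last (n + 1)) = ∑ i, a i • w i.castSucc := by
  have li : LinearIndependent K (w ∘ Fin.castSucc) := by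
    have := aux_li w h (Fin.last (n + 1))
    simpa [Fin.succAbove_last] using this
  set B : Module.Basis (Fin (n+1)) K (Fin (n+1) → K) :=
    basisOfLinearIndependentOfCardEqFinrank li (by simp) with hBdef
  have hB : ∀ i, B i = w i.castSucc := fun i => by
    rw [hBdef]; exact congrFun (coe_basisOfLinearIndependentOfCardEqFinrank li (by simp)) i
  set a : Fin (n + 1) → K := fun i => B.repr (w (Fin.last (n + 1))) i with ha
  have hsum : w (Fin.last (n + 1)) = ∑ i, a i • w i.castSucc := by
    conv_lhs => rw [← B.sum_repr (w (Fin.last (n + 1)))]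
    exact Finset.sum_congr rfl fun i _ => by rw [hB]
  refine ⟨B, hB, a, ?_, hsum⟩
  intro j haj
  -- derive contradiction from linear independence of w ∘ (castSucc j).succAbove
  have li2 := aux_li w h (Fin.castSucc j)
  rw [Fintype.linearIndependent_iff] at li2
  set c : Fin (n + 2) → K := Fin.lastCases 1 (fun i => -a i) with hc
  have hcsum : ∑ k, c k • w k = 0 := by
    rw [Fin.sum_univ_castSucc]
    simp only [hc, Fin.lastCases_castSucc, Fin.lastCases_last, one_smul, neg_smul]
    rw [Finset.sum_neg_distrib, neg_add_eq_zero]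
    exact hsum.symm
  have hd := li2 (fun i => c ((Fin.castSucc j).succAbove i)) ?_ (Fin.last n)
  · have : (Fin.castSucc j).succAbove (Fin.last n) = Fin.last (n + 1) := by
      simp [Fin.succAbove, Fin.lt_iff_val_lt_val]; omega
    rw [this] at hd
    simp [hc] at hd
  · have := Fin.sum_univ_succAbove (fun k => c k • w k) (Fin.castSucc j)
    rw [hcsum] at this
    have hcp : c (Fin.castSucc j) = 0 := by simp [hc, haj]
    simp only [Function.comp]
    simpa [hcp] using this.symm


/-- Let `K` be a field, and `u v : Fin (n+2) → K^{n+1}` two families of nonzero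
vectors in general position (any `n+1` of them are linearly independent). Then there
is `g ∈ GL_{n+1}(K)` and scalars `λ i ∈ Kˣ` with `g (u i) = λ i • v i` for all `i`;
moreover `g` is unique up to a scalar: any `g'` with `g' (u i) ∈ Kˣ • v i` for all `i`
differs from `g` by a scalar multiple of the identity. In particular `PGL_{n+1}(K)`
acts sharply transitively on projective frames of `Pⁿ(K)`. -/
theorem stmt_6 {K : Type*} [Field K] (n : ℕ)
    (u v : Fin (n + 2) → (Fin (n + 1) → K))
    (hu0 : ∀ i, u i ≠ 0) (hv0 : ∀ i, v i ≠ 0)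
    (hu : ∀ s : Finset (Fin (n + 2)), s.card = n + 1 →
      LinearIndependent K (fun i : s => u i))
    (hv : ∀ s : Finset (Fin (n + 2)), s.card = n + 1 →
      LinearIndependent K (fun i : s => v i)) :
    ∃ g : (Fin (n + 1) → K) ≃ₗ[K] (Fin (n + 1) → K),
      (∃ lam : Fin (n + 2) → Kˣ, ∀ i, g (u i) = (lam i : K) • v i) ∧
      ∀ g' : (Fin (n + 1) → K) ≃ₗ[K] (Fin (n + 1) → K),
        (∀ i, ∃ mu : Kˣ, g' (u i) = (mu : K) • v i) →
        ∃ c : Kˣ, ∀ x, g' x = (c : K) • g x := by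

  obtain ⟨Bu, hBu, a, ha, hau⟩ := aux_frame u hu
  obtain ⟨Bv, hBv, b, hb, hbv⟩ := aux_frame v hv
  set au : Fin (n+1) → Kˣ := fun i => Units.mk0 (a i) (ha i) with hau'
  set bu : Fin (n+1) → Kˣ := fun i => Units.mk0 (b i) (hb i) with hbu'
  set lamc : Fin (n+1) → Kˣ := fun i => bu i * (au i)⁻¹ with hlamc
  set C : Module.Basis (Fin (n+1)) K (Fin (n+1) → K) := Bv.unitsSMul lamc with hC
  set g : (Fin (n + 1) → K) ≃ₗ[K] (Fin (n + 1) → K) := Bu.equiv C (Equiv.refl _) with hg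
  have hgi : ∀ i : Fin (n+1), g (u i.castSucc) = (lamc i : K) • v i.castSucc := by
    intro i
    rw [← hBu i, hg, Bu.equiv_apply, Equiv.refl_apply, hC, Bv.unitsSMul_apply,
      Units.smul_def, hBv]
  have hglast : g (u (Fin.last (n+1))) = v (Fin.last (n+1)) := by
    rw [hau, map_sum]
    rw [hbv]
    refine Finset.sum_congr rfl fun i _ => ?_
    rw [map_smul, hgi i, smul_smul]
    congr 1
    simp only [hlamc, hau', hbu', Units.val_mul, Units.val_inv_eq_inv_val, Units.val_mk0]
    rw [mul_comm (b i) ((a i)⁻¹), ← mul_assoc, mul_inv_cancel₀ (ha i), one_mul]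
  refine ⟨g, ⟨Fin.lastCases 1 lamc, ?_⟩, ?_⟩
  · intro i
    induction i using Fin.lastCases with
    | last => simpa using hglast
    | cast i => simpa using hgi i
  · intro g' hg'
    choose mu hmu using hg'
    set c : Kˣ := mu (Fin.last (n+1)) with hcdef
    -- key coefficient identity
    have key : ∀ i : Fin (n+1), a i * (mu i.castSucc : K) = (c : K) * b i := by
      have h1 : g' (u (Fin.last (n+1))) = ∑ i, (a i * (mu i.castSucc : K)) • v i.castSucc := by
        rw [hau, map_sum]
        refine Finset.sum_congr rfl fun i _ => ?_
        rw [map_smul, hmu, smul_smul]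
      have h2 : g' (u (Fin.last (n+1))) = ∑ i, ((c : K) * b i) • v i.castSucc := by
        rw [hmu, hbv, Finset.smul_sum]
        refine Finset.sum_congr rfl fun i _ => ?_
        rw [smul_smul]
      have h3 : ∑ i, ((a i * (mu i.castSucc : K)) - (c : K) * b i) • v i.castSucc = 0 := by
        simp only [sub_smul]
        rw [Finset.sum_sub_distrib, ← h1, ← h2, sub_self]
      have li := Bv.linearIndependent
      rw [Fintype.linearIndependent_iff] at li
      intro i
      have := li (fun i => (a i * (mu i.castSucc : K)) - (c : K) * b i) ?_ i
      · exact sub_eq_zero.mp this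
      · rw [← h3]
        exact Finset.sum_congr rfl fun i _ => by rw [hBv]
    refine ⟨c, ?_⟩
    have : (g' : (Fin (n+1) → K) →ₗ[K] (Fin (n+1) → K)) = (c : K) • (g : (Fin (n+1) → K) →ₗ[K] (Fin (n+1) → K)) := by
      apply Bu.ext
      intro i
      have h4 : g' (Bu i) = (mu i.castSucc : K) • v i.castSucc := by rw [hBu, hmu]
      have h5 : g (Bu i) = (lamc i : K) • v i.castSucc := by rw [hBu, hgi]
      simp only [LinearEquiv.coe_coe, LinearMap.smul_apply]
      rw [h4, h5, smul_smul]
      congr 1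
      have hk := key i
      have hai := ha i
      simp only [hlamc, hau', hbu', Units.val_mul, Units.val_inv_eq_inv_val, Units.val_mk0]
      field_simp
      linear_combination hk
    intro x
    exact congrFun (congrArg (fun f => f.toFun) this) x
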